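/- Let m ≥ 2, let Δ be a flag (2m−1)-dimensional pseudomanifold, and let σ be a facet of Δ. Then Σ_{v∈σ} f₀(lk({v},Δ)) = |∪_{v∈σ} V(lk({v},Δ))| + 4m + (2m−3)·|∪_{δ⊆σ, |δ|=2m−2} V(lk(δ,Δ))| + Σ_{i=2}^{2m−3} (i−1)·b_i. -/

import Mathlib

open Finset

variable {V : Type*} [DecidableEq V]

/-- A simplicial complex on (a subset of) the vertex type `V`: a collection of
finite sets (the faces) that contains the empty set and is closed under inclusion. -/
def IsComplex (Δ : Finset (Finset V)) : Prop :=
  ∅ ∈ Δ ∧ ∀ σ ∈ Δ, ∀ τ ⊆ σ, τ ∈ Δ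

/-- The vertex set `V(Δ)` of a complex. -/
def verts (Δ : Finset (Finset V)) : Finset V := Δ.sup id

/-- The link `lk(σ,Δ) = {τ ∈ Δ : τ ∩ σ = ∅ ∧ τ ∪ σ ∈ Δ}`. -/
def link (Δ : Finset (Finset V)) (σ : Finset V) : Finset (Finset V) :=
  Δ.filter fun τ => τ ∩ σ = ∅ ∧ τ ∪ σ ∈ Δ

/-- The induced subcomplex `Δ[W] = {σ ∈ Δ : σ ⊆ W}`. -/
def induced (Δ : Finset (Finset V)) (W : Finset V) : Finset (Finset V) :=
  Δ.filter fun σ => σ ⊆ W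

/-- `fNum Δ i` is the number `f_i(Δ)` of `i`-dimensional faces of `Δ`,
i.e. of faces of cardinality `i + 1`. -/
def fNum (Δ : Finset (Finset V)) (i : ℕ) : ℕ :=
  (Δ.filter fun σ => σ.card = i + 1).card

/-- `Δ` is flag: every set of vertices all of whose two-element subsets are
faces of `Δ` is itself a face of `Δ`.  (Taking `u = v` below, this in particular
requires each member of `S` to be a vertex of `Δ`.) -/
def IsFlag (Δ : Finset (Finset V)) : Prop :=
  ∀ S : Finset V, (∀ u ∈ S, ∀ v ∈ S, ({u, v} : Finset V) ∈ Δ) → S ∈ Δ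

/-- A facet: an inclusion-maximal face. -/
def IsFacet (Δ : Finset (Finset V)) (σ : Finset V) : Prop :=
  σ ∈ Δ ∧ ∀ τ ∈ Δ, σ ⊆ τ → τ = σ

/-- A `(d-1)`-dimensional pseudomanifold: a pure `(d-1)`-dimensional complex
(all facets have cardinality `d`) in which every `(d-2)`-dimensional face
(cardinality `d-1`) is contained in exactly two facets (= faces of cardinality `d`). -/
def IsPseudomanifold (Δ : Finset (Finset V)) (d : ℕ) : Prop :=
  IsComplex Δ ∧ (∀ σ, IsFacet Δ σ → σ.card = d) ∧
    ∀ τ ∈ Δ, τ.card = d - 1 → (Δ.filter fun σ => σ.card = d ∧ τ ⊆ σ).card = 2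

/-- The 1-skeleton graph of a complex. -/
def skGraph (Δ : Finset (Finset V)) : SimpleGraph V where
  Adj u v := u ≠ v ∧ ({u, v} : Finset V) ∈ Δ
  symm := ⟨fun u v h => ⟨h.1.symm, by rw [Finset.pair_comm]; exact h.2⟩⟩
  loopless := ⟨fun u h => h.1 rfl⟩

/-- The 1-skeleton graph, restricted to the vertex set of `Δ`, is connected. -/
def ConnOn (Δ : Finset (Finset V)) : Prop :=
  ((skGraph Δ).induce (verts Δ : Set V)).Connected

/-- A normal `(d-1)`-pseudomanifold: the 1-skeleton is connected and the
1-skeleton of the link of each face of dimension at most `d-3`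
(cardinality at most `d-2`) is connected. -/
def IsNormalPseudomanifold (Δ : Finset (Finset V)) (d : ℕ) : Prop :=
  IsPseudomanifold Δ d ∧ ConnOn Δ ∧
    ∀ σ ∈ Δ, σ.card + 2 ≤ d → ConnOn (link Δ σ)

/-- A circle (cycle): a connected 1-dimensional pseudomanifold. -/
def IsCircle (Δ : Finset (Finset V)) : Prop :=
  IsPseudomanifold Δ 2 ∧ ConnOn Δ

/-- The 0-dimensional complex consisting of two disjoint vertices. -/
def IsTwoPoints (P : Finset (Finset V)) : Prop :=
  ∃ a b : V, a ≠ b ∧ P = {∅, {a}, {b}}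

/-- The join of two complexes (on disjoint vertex sets): faces `σ ∪ τ`
with `σ ∈ Δ`, `τ ∈ Γ`. -/
def join (Δ Γ : Finset (Finset V)) : Finset (Finset V) :=
  (Δ ×ˢ Γ).image fun p => p.1 ∪ p.2

/-- `Δ` is the suspension of a circle: the join of a circle with two disjoint points. -/
def IsSuspensionOfCircle (Δ : Finset (Finset V)) : Prop :=
  ∃ C P, IsCircle C ∧ IsTwoPoints P ∧ Disjoint (verts C) (verts P) ∧ Δ = join C P

/-- Iterated join of a family of complexes. -/
def joinFam : (m : ℕ) → (Fin m → Finset (Finset V)) → Finset (Finset V)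
  | 0, _ => {∅}
  | m + 1, C => join (C 0) (joinFam m fun i => C i.succ)

/-- `Δ` is the join of `m` circles (on pairwise disjoint vertex sets). -/
def IsJoinOfCircles (Δ : Finset (Finset V)) (m : ℕ) : Prop :=
  ∃ C : Fin m → Finset (Finset V), (∀ i, IsCircle (C i)) ∧
    (∀ i j, i ≠ j → Disjoint (verts (C i)) (verts (C j))) ∧ Δ = joinFam m C

/-- `a_k = Σ_{τ ⊆ σ, |τ| = k} f₀(lk(τ,Δ))`. -/
def aNum (Δ : Finset (Finset V)) (σ : Finset V) (k : ℕ) : ℕ :=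
  ∑ τ ∈ σ.powersetCard k, fNum (link Δ τ) 0

/-- `W_τ`: the vertices `w` of `lk(τ,Δ)` with `{w,u} ∉ Δ` for every `u ∈ σ \ τ`. -/
def Wset (Δ : Finset (Finset V)) (σ τ : Finset V) : Finset V :=
  (verts (link Δ τ)).filter fun w => ∀ u ∈ σ \ τ, ({w, u} : Finset V) ∉ Δ

/-- `b_k = Σ_{τ ⊆ σ, |τ| = k} |W_τ|`. -/
def bNum (Δ : Finset (Finset V)) (σ : Finset V) (k : ℕ) : ℕ :=
  ∑ τ ∈ σ.powersetCard k, (Wset Δ σ τ).card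

/-- The Euler characteristic `χ(Δ) = Σ_{i ≥ 0} (-1)^i f_i(Δ)`, computed as a sum
of `(-1)^{|σ|-1}` over the nonempty faces `σ`. -/
def eulerChar (Δ : Finset (Finset V)) : ℤ :=
  ∑ σ ∈ Δ.filter (fun σ => σ ≠ ∅), (-1 : ℤ) ^ (σ.card - 1)

/-- `Δ` is Eulerian: for every face `σ` (including `σ = ∅`, whose link is `Δ`),
`χ(lk(σ,Δ)) = 1 + (-1)^{dim lk(σ,Δ)}`; since `dim lk(σ,Δ)` is one less than the
maximal cardinality of a face of the link, this equals `1 - (-1)^{max card}`. -/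
def IsEulerian (Δ : Finset (Finset V)) : Prop :=
  ∀ σ ∈ Δ, eulerChar (link Δ σ) = 1 - (-1) ^ ((link Δ σ).sup Finset.card)


lemma mem_verts_link {Δ : Finset (Finset V)} (hC : IsComplex Δ) (τ : Finset V) (w : V) :
    w ∈ verts (link Δ τ) ↔ w ∉ τ ∧ insert w τ ∈ Δ := by
  constructor
  · rintro hw
    rw [verts, Finset.mem_sup] at hw
    obtain ⟨ρ, hρ, hwρ⟩ := hw
    rw [link, Finset.mem_filter] at hρ
    obtain ⟨hρΔ, hdisj, hun⟩ := hρ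
    constructor
    · intro hwτ
      have : w ∈ ρ ∩ τ := Finset.mem_inter.mpr ⟨hwρ, hwτ⟩
      rw [hdisj] at this; exact absurd this (Finset.notMem_empty w)
    · exact hC.2 _ hun _ (Finset.insert_subset (Finset.mem_union_left _ hwρ)
        Finset.subset_union_right)
  · rintro ⟨hwτ, hins⟩
    rw [verts, Finset.mem_sup]
    refine ⟨{w}, ?_, Finset.mem_singleton_self w⟩
    rw [link, Finset.mem_filter]
    refine ⟨hC.2 _ hins _ (by simp), Finset.singleton_inter_of_notMem hwτ, ?_⟩
    rw [← Finset.insert_eq]; exact hins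

lemma fNum_link_zero {Δ : Finset (Finset V)} (hC : IsComplex Δ) (τ : Finset V) :
    fNum (link Δ τ) 0 = (verts (link Δ τ)).card := by
  rw [fNum]
  refine (Finset.card_bij (fun w _ => ({w} : Finset V)) ?_ ?_ ?_).symm
  · intro w hw
    rw [mem_verts_link hC] at hw
    rw [Finset.mem_filter]
    refine ⟨?_, by simp⟩
    show ({w} : Finset V) ∈ link Δ τ
    rw [link, Finset.mem_filter]
    exact ⟨hC.2 _ hw.2 _ (by simp), Finset.singleton_inter_of_notMem hw.1,
      by rw [← Finset.insert_eq]; exact hw.2⟩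
  · intro a _ b _ h
    simpa using h
  · intro ρ hρ
    rw [Finset.mem_filter] at hρ
    obtain ⟨w, rfl⟩ := Finset.card_eq_one.mp hρ.2
    refine ⟨w, ?_, rfl⟩
    rw [verts, Finset.mem_sup]
    exact ⟨{w}, hρ.1, Finset.mem_singleton_self w⟩

/-- Let `m ≥ 2`, let `Δ` be a flag `(2m-1)`-dimensional
pseudomanifold and `σ` a facet.  Then `Σ_{v ∈ σ} f₀(lk({v},Δ))
= |∪_{v ∈ σ} V(lk({v},Δ))| + 4m
  + (2m-3)·|∪_{δ ⊆ σ, |δ| = 2m-2} V(lk(δ,Δ))| + Σ_{i=2}^{2m-3} (i-1)·b_i`. -/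
theorem sum_of_vertex_links_formula (m : ℕ) (hm : 2 ≤ m) (Δ : Finset (Finset V))
    (hF : IsFlag Δ) (hP : IsPseudomanifold Δ (2 * m)) (σ : Finset V)
    (hσ : IsFacet Δ σ) :
    ∑ v ∈ σ, fNum (link Δ {v}) 0 =
      (σ.biUnion fun v => verts (link Δ {v})).card + 4 * m
        + (2 * m - 3) *
            ((σ.powersetCard (2 * m - 2)).biUnion fun δ => verts (link Δ δ)).card
        + ∑ i ∈ Finset.Icc 2 (2 * m - 3), (i - 1) * bNum Δ σ i := by
  obtain ⟨hC, hPure, hRidge⟩ := hP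
  have hσΔ : σ ∈ Δ := hσ.1
  obtain ⟨n, rfl⟩ : ∃ n, m = n + 2 := ⟨m - 2, by omega⟩
  have hσcard : σ.card = 2*n+4 := by have := hPure σ hσ; omega
  rw [show 2*(n+2)-3 = 2*n+1 from by omega, show 2*(n+2)-2 = 2*n+2 from by omega,
    show 4*(n+2) = 4*n+8 from by omega]
  set N : V → Finset V := fun w => σ.filter fun v => v ≠ w ∧ ({w, v} : Finset V) ∈ Δ with hN
  set U : Finset V := σ.biUnion fun v => verts (link Δ {v}) with hU
  have h_mem_N : ∀ w v, v ∈ N w ↔ v ∈ σ ∧ v ≠ w ∧ ({w, v} : Finset V) ∈ Δ := by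
    intro w v
    simp only [hN, Finset.mem_filter, and_assoc]
  have hNsub : ∀ w, N w ⊆ σ := fun w => by
    simp only [hN]; exact Finset.filter_subset _ _
  have hsingΔ : ∀ w v : V, ({w, v} : Finset V) ∈ Δ → ({w} : Finset V) ∈ Δ :=
    fun w v h => hC.2 _ h _ (by simp)
  have hmemU : ∀ w, w ∈ U ↔ (N w).Nonempty := by
    intro w
    rw [hU, Finset.mem_biUnion]
    constructor
    · rintro ⟨v, hv, hw⟩
      rw [mem_verts_link hC] at hw
      exact ⟨v, (h_mem_N w v).mpr ⟨hv, fun h => hw.1 (Finset.mem_singleton.mpr h.symm), hw.2⟩⟩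
    · rintro ⟨v, hv⟩
      rw [h_mem_N] at hv
      exact ⟨v, hv.1, (mem_verts_link hC _ _).mpr
        ⟨fun h => hv.2.1 (Finset.mem_singleton.mp h).symm, hv.2.2⟩⟩
  have hNΔ : ∀ w, ({w} : Finset V) ∈ Δ → insert w (N w) ∈ Δ := by
    intro w hwΔ
    apply hF
    intro u hu v hv
    rw [Finset.mem_insert] at hu hv
    rcases hu with rfl | hu
    · rcases hv with rfl | hv
      · rw [Finset.pair_eq_singleton]; exact hwΔ
      · exact ((h_mem_N _ _).mp hv).2.2
    · rcases hv with rfl | hv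
      · rw [Finset.pair_comm]; exact ((h_mem_N _ _).mp hu).2.2
      · exact hC.2 σ hσΔ _ (Finset.insert_subset (hNsub w hu)
          (Finset.singleton_subset_iff.mpr (hNsub w hv)))
  have hNσ : ∀ w ∈ σ, N w = σ.erase w := by
    intro w hw
    ext v
    rw [h_mem_N, Finset.mem_erase]
    constructor
    · rintro ⟨h1, h2, _⟩; exact ⟨h2, h1⟩
    · rintro ⟨h1, h2⟩
      exact ⟨h2, h1, hC.2 σ hσΔ _ (Finset.insert_subset hw
        (Finset.singleton_subset_iff.mpr h2))⟩
  have hσU : σ ⊆ U := by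
    intro w hw
    rw [hmemU, hNσ w hw, ← Finset.card_pos, Finset.card_erase_of_mem hw, hσcard]
    omega
  have hNle : ∀ w ∈ U, w ∉ σ → (N w).card ≤ 2*n+3 := by
    intro w hwU hwσ
    have hle : (N w).card ≤ σ.card := Finset.card_le_card (hNsub w)
    have hne : (N w).card ≠ 2*n+4 := by
      intro hcard
      have hNw : N w = σ := Finset.eq_of_subset_of_card_le (hNsub w) (by omega)
      obtain ⟨v, hv⟩ := (hmemU w).mp hwU
      have hwΔ : ({w} : Finset V) ∈ Δ := hsingΔ w v ((h_mem_N _ _).mp hv).2.2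
      have h2 := hσ.2 _ (hNw ▸ hNΔ w hwΔ) (Finset.subset_insert _ _)
      exact hwσ (h2 ▸ Finset.mem_insert_self w σ)
    omega
  have hWset : ∀ τ ⊆ σ, τ.Nonempty → Wset Δ σ τ = (U \ σ).filter fun w => N w = τ := by
    intro τ hτσ hτne
    ext w
    simp only [Wset, Finset.mem_filter, Finset.mem_sdiff, mem_verts_link hC]
    constructor
    · rintro ⟨⟨hwτ, hins⟩, hcond⟩
      have hwΔ : ({w} : Finset V) ∈ Δ := hC.2 _ hins _ (by simp)
      have hwσ : w ∉ σ := by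
        intro hwσ
        exact hcond w ⟨hwσ, hwτ⟩ (by rw [Finset.pair_eq_singleton]; exact hwΔ)
      have hNτ : N w = τ := by
        ext v
        rw [h_mem_N]
        constructor
        · rintro ⟨hvσ, hvw, hpair⟩
          by_contra hvτ
          exact hcond v ⟨hvσ, hvτ⟩ hpair
        · intro hvτ
          refine ⟨hτσ hvτ, fun h => hwτ (h ▸ hvτ), ?_⟩
          exact hC.2 _ hins _ (Finset.insert_subset (Finset.mem_insert_self w τ)
            (Finset.singleton_subset_iff.mpr (Finset.mem_insert_of_mem hvτ)))
      refine ⟨⟨?_, hwσ⟩, hNτ⟩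
      obtain ⟨v, hvτ⟩ := hτne
      rw [hmemU, hNτ]
      exact ⟨v, hvτ⟩
    · rintro ⟨⟨hwU, hwσ⟩, hNτ⟩
      have hwΔ : ({w} : Finset V) ∈ Δ := by
        obtain ⟨v, hv⟩ := (hmemU w).mp hwU
        exact hsingΔ w v ((h_mem_N _ _).mp hv).2.2
      refine ⟨⟨fun h => hwσ (hτσ h), hNτ ▸ hNΔ w hwΔ⟩, ?_⟩
      intro u hu hpair
      have : u ∈ N w := (h_mem_N _ _).mpr ⟨hu.1, fun h => hwσ (h ▸ hu.1), hpair⟩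
      rw [hNτ] at this
      exact hu.2 this
  have hbNum : ∀ k, 1 ≤ k → bNum Δ σ k = ((U \ σ).filter fun w => (N w).card = k).card := by
    intro k hk
    have hmap : ∀ w ∈ (U \ σ).filter fun w => (N w).card = k, N w ∈ σ.powersetCard k := by
      intro w hw
      rw [Finset.mem_filter] at hw
      exact Finset.mem_powersetCard.mpr ⟨hNsub w, hw.2⟩
    rw [bNum, Finset.card_eq_sum_card_fiberwise hmap]
    refine Finset.sum_congr rfl fun τ hτ => ?_
    rw [Finset.mem_powersetCard] at hτ
    rw [hWset τ hτ.1 (Finset.card_pos.mp (by omega))]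
    congr 1
    ext w
    simp only [Finset.mem_filter, Finset.mem_sdiff]
    constructor
    · rintro ⟨hw, hNw⟩
      exact ⟨⟨hw, by rw [hNw, hτ.2]⟩, hNw⟩
    · rintro ⟨⟨hw, _⟩, hNw⟩
      exact ⟨hw, hNw⟩
  have hWcard : ∀ τ ∈ σ.powersetCard (2*n+3), (Wset Δ σ τ).card = 1 := by
    intro τ hτ
    rw [Finset.mem_powersetCard] at hτ
    obtain ⟨hτσ, hτcard⟩ := hτ
    have hτΔ : τ ∈ Δ := hC.2 σ hσΔ τ hτσ
    have h2 := hRidge τ hτΔ (by omega)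
    have hσmem : σ ∈ Δ.filter (fun ρ => ρ.card = 2*(n+2) ∧ τ ⊆ ρ) :=
      Finset.mem_filter.mpr ⟨hσΔ, by omega, hτσ⟩
    obtain ⟨a, b, hab, hset⟩ := Finset.card_eq_two.mp h2
    obtain ⟨ρ, hρmem, hρne, huniq⟩ :
        ∃ ρ ∈ Δ.filter (fun ρ => ρ.card = 2*(n+2) ∧ τ ⊆ ρ), ρ ≠ σ ∧
          ∀ ρ' ∈ Δ.filter (fun ρ => ρ.card = 2*(n+2) ∧ τ ⊆ ρ), ρ' = σ ∨ ρ' = ρ := by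
      rw [hset] at hσmem ⊢
      rw [Finset.mem_insert, Finset.mem_singleton] at hσmem
      rcases hσmem with rfl | rfl
      · refine ⟨b, by simp, Ne.symm hab, fun ρ' hρ' => ?_⟩
        rwa [Finset.mem_insert, Finset.mem_singleton] at hρ'
      · refine ⟨a, by simp, hab, fun ρ' hρ' => ?_⟩
        rw [Finset.mem_insert, Finset.mem_singleton] at hρ'
        exact hρ'.symm
    rw [Finset.mem_filter] at hρmem
    obtain ⟨hρΔ, hρcard, hτρ⟩ := hρmem
    have hdiff : (ρ \ τ).card = 1 := by
      rw [Finset.card_sdiff_of_subset hτρ]; omega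
    obtain ⟨w, hwdef⟩ := Finset.card_eq_one.mp hdiff
    have hρeq : ρ = insert w τ := by
      have hun := Finset.union_sdiff_of_subset hτρ
      rw [hwdef] at hun
      rw [← hun]
      ext x; simp [or_comm]
    have hwτ : w ∉ τ := by
      have : w ∈ ρ \ τ := hwdef ▸ Finset.mem_singleton_self w
      exact (Finset.mem_sdiff.mp this).2
    have hwσ : w ∉ σ := by
      intro hwσ
      apply hρne
      apply Finset.eq_of_subset_of_card_le _ (by omega)
      rw [hρeq]
      exact Finset.insert_subset hwσ hτσ
    have hρΔ' : insert w τ ∈ Δ := hρeq ▸ hρΔ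
    have hfacet : ∀ w', w' ∉ τ → insert w' τ ∈ Δ → insert w' τ = σ ∨ insert w' τ = ρ := by
      intro w' hw'τ hins
      apply huniq
      rw [Finset.mem_filter]
      refine ⟨hins, ?_, Finset.subset_insert _ _⟩
      rw [Finset.card_insert_of_notMem hw'τ]; omega
    have hcondw : ∀ u ∈ σ \ τ, ({w, u} : Finset V) ∉ Δ := by
      intro u hu hpair
      rw [Finset.mem_sdiff] at hu
      have hinsσ : insert w σ ∈ Δ := by
        apply hF
        intro x hx y hy
        rw [Finset.mem_insert] at hx hy
        have hpairw : ∀ z ∈ σ, ({w, z} : Finset V) ∈ Δ := by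
          intro z hz
          by_cases hzτ : z ∈ τ
          · exact hC.2 _ hρΔ' _ (Finset.insert_subset (Finset.mem_insert_self _ _)
              (Finset.singleton_subset_iff.mpr (Finset.mem_insert_of_mem hzτ)))
          · have hzu : z = u := by
              have h1 : (σ \ τ).card = 1 := by
                rw [Finset.card_sdiff_of_subset hτσ]; omega
              obtain ⟨y0, hy0⟩ := Finset.card_eq_one.mp h1
              have hz' : z ∈ σ \ τ := Finset.mem_sdiff.mpr ⟨hz, hzτ⟩
              have hu' : u ∈ σ \ τ := Finset.mem_sdiff.mpr ⟨hu.1, hu.2⟩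
              rw [hy0, Finset.mem_singleton] at hz' hu'
              rw [hz', hu']
            rw [hzu]; exact hpair
        rcases hx with rfl | hx
        · rcases hy with rfl | hy
          · rw [Finset.pair_eq_singleton]
            exact hC.2 _ hρΔ' _ (by simp)
          · exact hpairw y hy
        · rcases hy with rfl | hy
          · rw [Finset.pair_comm]; exact hpairw x hx
          · exact hC.2 σ hσΔ _ (Finset.insert_subset hx (Finset.singleton_subset_iff.mpr hy))
      have h3 := hσ.2 _ hinsσ (Finset.subset_insert _ _)
      exact absurd (h3 ▸ Finset.mem_insert_self w σ) hwσ
    rw [Finset.card_eq_one]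
    refine ⟨w, ?_⟩
    ext w'
    rw [Finset.mem_singleton]
    simp only [Wset, Finset.mem_filter, mem_verts_link hC]
    constructor
    · rintro ⟨⟨hw'τ, hins⟩, hcond⟩
      rcases hfacet w' hw'τ hins with heq | heq
      · exfalso
        have hw'σ : w' ∈ σ := heq ▸ Finset.mem_insert_self w' τ
        exact hcond w' (Finset.mem_sdiff.mpr ⟨hw'σ, hw'τ⟩)
          (by rw [Finset.pair_eq_singleton]; exact hC.2 _ hins _ (by simp))
      · have hw'ρ : w' ∈ ρ := heq ▸ Finset.mem_insert_self w' τ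
        have hmem : w' ∈ ρ \ τ := Finset.mem_sdiff.mpr ⟨hw'ρ, hw'τ⟩
        rw [hwdef, Finset.mem_singleton] at hmem
        exact hmem
    · rintro rfl
      exact ⟨⟨hwτ, hρΔ'⟩, hcondw⟩
  have hB1 : bNum Δ σ (2*n+3) = 2*n+4 := by
    rw [bNum, Finset.sum_congr rfl hWcard, Finset.sum_const, smul_eq_mul, mul_one,
      Finset.card_powersetCard, hσcard, show 2*n+3 = (2*n+4) - 1 from by omega,
      Nat.choose_symm (by omega), Nat.choose_one_right]
  -- LHS as a sum over U
  have hLHS : ∑ v ∈ σ, fNum (link Δ {v}) 0 = ∑ w ∈ U, (N w).card := by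
    have step1 : ∀ v ∈ σ, fNum (link Δ {v}) 0
        = ∑ w ∈ U, if w ∈ verts (link Δ {v}) then 1 else 0 := by
      intro v hv
      have hsub : verts (link Δ {v}) ⊆ U := by
        rw [hU]; exact Finset.subset_biUnion_of_mem (fun v => verts (link Δ {v})) hv
      rw [fNum_link_zero hC, Finset.sum_ite_mem, Finset.inter_eq_right.mpr hsub,
        Finset.card_eq_sum_ones]
    rw [Finset.sum_congr rfl step1, Finset.sum_comm]
    refine Finset.sum_congr rfl fun w _ => ?_
    rw [Finset.sum_boole, Nat.cast_id]
    congr 1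
    ext v
    rw [Finset.mem_filter, h_mem_N, mem_verts_link hC]
    constructor
    · rintro ⟨hvσ, hw1, hw2⟩
      exact ⟨hvσ, fun h => hw1 (Finset.mem_singleton.mpr h.symm), hw2⟩
    · rintro ⟨hvσ, hvw, hp⟩
      exact ⟨hvσ, fun h => hvw (Finset.mem_singleton.mp h).symm, hp⟩
  have hsumσ : ∑ w ∈ σ, (N w).card = (2*n+4) * (2*n+3) := by
    have hc : ∀ w ∈ σ, (N w).card = 2*n+3 := by
      intro w hw
      rw [hNσ w hw, Finset.card_erase_of_mem hw, hσcard]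
      omega
    rw [Finset.sum_congr rfl hc, Finset.sum_const, smul_eq_mul, hσcard]

  have hmaps : ∀ w ∈ U \ σ, (N w).card ∈ Finset.Icc 1 (2*n+3) := by
    intro w hw
    rw [Finset.mem_sdiff] at hw
    have h1 := hNle w hw.1 hw.2
    have h2 : (N w).Nonempty := (hmemU w).mp hw.1
    rw [Finset.mem_Icc]
    exact ⟨Finset.card_pos.mpr h2, h1⟩
  have hfib : ∀ k ∈ Finset.Icc 1 (2*n+3),
      bNum Δ σ k = ((U \ σ).filter fun w => (N w).card = k).card :=
    fun k hk => hbNum k (Finset.mem_Icc.mp hk).1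
  have hcardUσ : (U \ σ).card = ∑ k ∈ Finset.Icc 1 (2*n+3), bNum Δ σ k := by
    rw [Finset.sum_congr rfl hfib]
    exact Finset.card_eq_sum_card_fiberwise hmaps
  have hcardU : U.card = (2*n+4) + ∑ k ∈ Finset.Icc 1 (2*n+3), bNum Δ σ k := by
    have h := Finset.card_sdiff_add_card_eq_card hσU
    omega
  have hsumN : ∑ w ∈ U \ σ, (N w).card = ∑ k ∈ Finset.Icc 1 (2*n+3), k * bNum Δ σ k := by
    rw [← Finset.sum_fiberwise_of_maps_to hmaps (fun w => (N w).card)]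
    refine Finset.sum_congr rfl fun k hk => ?_
    rw [hfib k hk]
    rw [Finset.sum_congr rfl (fun w hw => (Finset.mem_filter.mp hw).2),
      Finset.sum_const, smul_eq_mul]
    exact Nat.mul_comm _ _
  -- the union over (2n+2)-subsets
  have hU'eq : ((σ.powersetCard (2*n+2)).biUnion fun δ => verts (link Δ δ))
      = σ ∪ (U \ σ).filter fun w => 2*n+2 ≤ (N w).card := by
    ext w
    rw [Finset.mem_biUnion, Finset.mem_union, Finset.mem_filter, Finset.mem_sdiff]
    constructor
    · rintro ⟨δ, hδ, hwδ⟩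
      rw [Finset.mem_powersetCard] at hδ
      rw [mem_verts_link hC] at hwδ
      by_cases hwσ : w ∈ σ
      · exact Or.inl hwσ
      · right
        have hδN : δ ⊆ N w := by
          intro v hv
          refine (h_mem_N _ _).mpr ⟨hδ.1 hv, fun h => hwσ (h ▸ hδ.1 hv), ?_⟩
          exact hC.2 _ hwδ.2 _ (Finset.insert_subset (Finset.mem_insert_self _ _)
            (Finset.singleton_subset_iff.mpr (Finset.mem_insert_of_mem hv)))
        have hcard : 2*n+2 ≤ (N w).card := by
          have := Finset.card_le_card hδN
          omega
        refine ⟨⟨?_, hwσ⟩, hcard⟩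
        rw [hmemU]
        obtain ⟨v, hv⟩ : δ.Nonempty := Finset.card_pos.mp (by omega)
        exact ⟨v, hδN hv⟩
    · rintro (hwσ | ⟨⟨hwU, hwσ⟩, hcard⟩)
      · obtain ⟨δ, hδsub, hδcard⟩ := Finset.exists_subset_card_eq
          (show 2*n+2 ≤ (σ.erase w).card by rw [Finset.card_erase_of_mem hwσ, hσcard]; omega)
        refine ⟨δ, Finset.mem_powersetCard.mpr
          ⟨hδsub.trans (Finset.erase_subset _ _), hδcard⟩, ?_⟩
        rw [mem_verts_link hC]
        refine ⟨fun h => Finset.notMem_erase w σ (hδsub h), ?_⟩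
        exact hC.2 σ hσΔ _ (Finset.insert_subset hwσ
          (hδsub.trans (Finset.erase_subset _ _)))
      · obtain ⟨δ, hδsub, hδcard⟩ := Finset.exists_subset_card_eq hcard
        refine ⟨δ, Finset.mem_powersetCard.mpr ⟨hδsub.trans (hNsub w), hδcard⟩, ?_⟩
        rw [mem_verts_link hC]
        refine ⟨fun h => hwσ (hNsub w (hδsub h)), ?_⟩
        have hwΔ : ({w} : Finset V) ∈ Δ := by
          obtain ⟨v, hv⟩ := (hmemU w).mp hwU
          exact hsingΔ w v ((h_mem_N _ _).mp hv).2.2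
        exact hC.2 _ (hNΔ w hwΔ) _ (Finset.insert_subset_insert _ hδsub)
  have hU'card : ((σ.powersetCard (2*n+2)).biUnion fun δ => verts (link Δ δ)).card
      = 4*n+8 + bNum Δ σ (2*n+2) := by
    rw [hU'eq, Finset.card_union_of_disjoint (Finset.disjoint_left.mpr fun w hwσ hwf =>
      (Finset.mem_sdiff.mp (Finset.mem_filter.mp hwf).1).2 hwσ)]
    have hsplit : (U \ σ).filter (fun w => 2*n+2 ≤ (N w).card)
        = ((U \ σ).filter fun w => (N w).card = 2*n+2)
          ∪ ((U \ σ).filter fun w => (N w).card = 2*n+3) := by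
      rw [← Finset.filter_or]
      refine Finset.filter_congr fun w hw => ?_
      rw [Finset.mem_sdiff] at hw
      have := hNle w hw.1 hw.2
      constructor
      · intro h; omega
      · intro h; omega
    rw [hsplit, Finset.card_union_of_disjoint (Finset.disjoint_left.mpr fun w h1 h2 => by
      have e1 := (Finset.mem_filter.mp h1).2
      have e2 := (Finset.mem_filter.mp h2).2
      omega)]
    rw [← hbNum (2*n+2) (by omega), ← hbNum (2*n+3) (by omega), hB1, hσcard]
    omega
  -- interval splittings
  have hIcc1 : Finset.Icc 1 (2*n+3) = insert (2*n+3) (insert (2*n+2) (Finset.Icc 1 (2*n+1))) := by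
    ext x
    simp only [Finset.mem_Icc, Finset.mem_insert]
    omega
  have hnm1 : (2*n+3) ∉ insert (2*n+2) (Finset.Icc 1 (2*n+1)) := by
    simp only [Finset.mem_insert, Finset.mem_Icc]
    omega
  have hnm2 : (2*n+2) ∉ Finset.Icc 1 (2*n+1) := by
    simp only [Finset.mem_Icc]
    omega
  have hpoint : ∑ k ∈ Finset.Icc 1 (2*n+1), k * bNum Δ σ k
      = (∑ k ∈ Finset.Icc 1 (2*n+1), bNum Δ σ k)
        + ∑ k ∈ Finset.Icc 1 (2*n+1), (k-1) * bNum Δ σ k := by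
    rw [← Finset.sum_add_distrib]
    refine Finset.sum_congr rfl fun k hk => ?_
    rw [Finset.mem_Icc] at hk
    obtain ⟨j, rfl⟩ : ∃ j, k = j + 1 := ⟨k - 1, by omega⟩
    rw [Nat.add_sub_cancel]
    ring
  have hdrop1 : ∑ k ∈ Finset.Icc 1 (2*n+1), (k-1) * bNum Δ σ k
      = ∑ k ∈ Finset.Icc 2 (2*n+1), (k-1) * bNum Δ σ k := by
    have h12 : Finset.Icc 1 (2*n+1) = insert 1 (Finset.Icc 2 (2*n+1)) := by
      ext x
      simp only [Finset.mem_Icc, Finset.mem_insert]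
      omega
    rw [h12, Finset.sum_insert (by simp only [Finset.mem_Icc]; omega)]
    simp
  -- put everything together
  rw [hLHS, ← Finset.sum_sdiff hσU, hsumσ, hsumN, hcardU, hU'card]
  rw [hIcc1, Finset.sum_insert hnm1, Finset.sum_insert hnm2,
    Finset.sum_insert hnm1, Finset.sum_insert hnm2, hB1, hpoint, hdrop1]
  ring
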